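/- Let 𝓗 be an admissible affine hyperplane arrangement in E, let K be a subgroup of the isometry group of E stabilizing ⋀ and preserving 𝓗, set W_{𝓗,K} = K ⋉ W_𝓗, let L be a flat lying over ⋀, and let l ∈ L ∩ ⋀. Then {w·L : w ∈ W_{𝓗,K}, l ∈ w·L} = {σ·M : σ ∈ W_𝓗^l, M = w·L for some w ∈ W_{𝓗,K} such that M lies over ⋀ and l ∈ M}, where W_𝓗^l is the stabilizer of l in W_𝓗. -/

import Mathlib

section ArrangementSetup

variable {V : Type*} [NormedAddCommGroup V] [InnerProductSpace ℝ V] [FiniteDimensional ℝ V]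
variable {E : Type*} [MetricSpace E] [NormedAddTorsor V E]

/-- An affine hyperplane of the Euclidean affine space `E`: a nonempty affine subspace whose
direction has codimension `1`. -/
def IsAffineHyperplane (H : AffineSubspace ℝ E) : Prop :=
  (H : Set E).Nonempty ∧ Module.finrank ℝ H.direction + 1 = Module.finrank ℝ V

/-- `g` is the orthogonal reflection of `E` across the affine hyperplane `H`: an isometric
affine automorphism, different from the identity, fixing `H` pointwise. -/
def IsReflectionAcross (H : AffineSubspace ℝ E) (g : E ≃ᵃ[ℝ] E) : Prop :=
  Isometry g ∧ (∀ x ∈ H, g x = x) ∧ g ≠ AffineEquiv.refl ℝ E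

/-- The group `W_𝓗` generated by the reflections across the hyperplanes of `𝓗`. -/
def reflGroup (𝓗 : Set (AffineSubspace ℝ E)) : Subgroup (E ≃ᵃ[ℝ] E) :=
  Subgroup.closure {g | ∃ H ∈ 𝓗, IsReflectionAcross H g}

/-- `𝓗` is admissible: `W_𝓗` (a discrete group) acts properly on `E` and preserves `𝓗`. -/
def Admissible (𝓗 : Set (AffineSubspace ℝ E)) : Prop :=
  (∀ w ∈ reflGroup 𝓗, ∀ H ∈ 𝓗, H.map w.toAffineMap ∈ 𝓗) ∧
  (∀ s t : Set E, IsCompact s → IsCompact t →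
    {w : E ≃ᵃ[ℝ] E | w ∈ reflGroup 𝓗 ∧ (⇑w '' s ∩ t).Nonempty}.Finite)

/-- A chamber of `𝓗`: a connected component of the complement of the union of the
hyperplanes. -/
def IsChamber (𝓗 : Set (AffineSubspace ℝ E)) (C : Set E) : Prop :=
  ∃ x ∈ (⋃ H ∈ 𝓗, (H : Set E))ᶜ, C = connectedComponentIn (⋃ H ∈ 𝓗, (H : Set E))ᶜ x

/-- A flat of `𝓗`: a nonempty intersection of hyperplanes of `𝓗`. -/
def IsFlat (𝓗 : Set (AffineSubspace ℝ E)) (L : AffineSubspace ℝ E) : Prop :=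
  (L : Set E).Nonempty ∧ ∃ S ⊆ 𝓗, L = sInf S

/-- The flat `L` lies over the fundamental domain `A` if `L` is the affine span of `L ∩ A`. -/
def LiesOver (L : AffineSubspace ℝ E) (A : Set E) : Prop :=
  L = affineSpan ℝ ((L : Set E) ∩ A)

end ArrangementSetup



section Aux

variable {V : Type*} [NormedAddCommGroup V] [InnerProductSpace ℝ V] [FiniteDimensional ℝ V]
variable {E : Type*} [MetricSpace E] [NormedAddTorsor V E]

include V in
lemma aux_compact_closedBall (x : E) (r : ℝ) : IsCompact (Metric.closedBall x r) := by
  let e : V ≃ᵢ E := IsometryEquiv.vaddConst x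
  have : Metric.closedBall x r = ⇑e '' Metric.closedBall (e.symm x) r := by
    rw [e.image_closedBall, e.apply_symm_apply]
  rw [this]
  exact (isCompact_closedBall _ _).image e.continuous

omit [FiniteDimensional ℝ V] in
lemma aux_isometry_inv {w : E ≃ᵃ[ℝ] E} (h : Isometry ⇑w) : Isometry ⇑w.symm := by
  refine Isometry.of_dist_eq fun a b => ?_
  conv_rhs => rw [← w.apply_symm_apply a, ← w.apply_symm_apply b]
  exact (h.dist_eq _ _).symm

lemma reflGroup_isometry {𝓗 : Set (AffineSubspace ℝ E)} {w : E ≃ᵃ[ℝ] E}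
    (hw : w ∈ reflGroup (V := V) 𝓗) : Isometry ⇑w := by
  induction hw using Subgroup.closure_induction with
  | mem x hx => exact hx.choose_spec.2.1
  | one => rw [AffineEquiv.coe_one]; exact isometry_id
  | mul x y hx hy ihx ihy => rw [AffineEquiv.coe_mul]; exact ihx.comp ihy
  | inv x hx ihx => rw [AffineEquiv.inv_def]; exact aux_isometry_inv ihx

lemma hyperplane_data (H : AffineSubspace ℝ E) (hH : IsAffineHyperplane (V := V) H) :
    ∃ (r : E ≃ᵃ[ℝ] E) (f : E → ℝ),
      IsReflectionAcross H r ∧ (∀ x, r (r x) = x) ∧ Continuous f ∧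
      (∀ x, f x = 0 ↔ x ∈ H) ∧
      (∀ a b : E, ∀ t : ℝ, f (t • (b -ᵥ a) +ᵥ a) = f a + t * (f b - f a)) ∧
      (∀ y c : E, dist y (r c) ^ 2 = dist y c ^ 2 + 4 * f c * f y) := by
  obtain ⟨hne, hdim⟩ := hH
  haveI : Nonempty H := hne.to_subtype
  obtain ⟨p, hp⟩ := hne
  have hdim' : Module.finrank ℝ H.directionᗮ = 1 := by
    have h1 := Submodule.finrank_add_finrank_orthogonal (K := H.direction) (𝕜 := ℝ) (E := V)
    omega
  have hbot : H.directionᗮ ≠ ⊥ := by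
    intro h; rw [h] at hdim'; simp at hdim'
  obtain ⟨n₀, hn₀mem, hn₀⟩ := Submodule.exists_mem_ne_zero_of_ne_bot hbot
  set n : V := ‖n₀‖⁻¹ • n₀ with hn_def
  have hnorm : ‖n‖ = 1 := norm_smul_inv_norm hn₀
  have hnne : n ≠ 0 := by intro h; rw [h, norm_zero] at hnorm; norm_num at hnorm
  have hnmem : n ∈ H.directionᗮ := Submodule.smul_mem _ _ hn₀mem
  have hspan : Submodule.span ℝ {n} = H.directionᗮ := by
    refine Submodule.eq_of_le_of_finrank_eq ?_ ?_
    · rwa [Submodule.span_singleton_le_iff_mem]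
    · rw [finrank_span_singleton hnne, hdim']
  set f : E → ℝ := fun x => (inner ℝ (x -ᵥ p) n : ℝ) with hf_def
  have hfsub : ∀ x y : E, f x - f y = (inner ℝ (x -ᵥ y) n : ℝ) := by
    intro x y
    rw [hf_def]
    simp only
    rw [← inner_sub_left, vsub_sub_vsub_cancel_right]
  have hfcont : Continuous f := by
    exact Continuous.inner (continuous_id.vsub continuous_const) continuous_const
  have hfmem : ∀ x, f x = 0 ↔ x ∈ H := by
    intro x
    constructor
    · intro hfx
      have hdir : H.direction = (Submodule.span ℝ {n})ᗮ := by
        rw [hspan, Submodule.orthogonal_orthogonal]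
      have : x -ᵥ p ∈ H.direction := by
        rw [hdir, Submodule.mem_orthogonal]
        intro u hu
        obtain ⟨c, rfl⟩ := Submodule.mem_span_singleton.mp hu
        rw [inner_smul_left]
        simp only [RCLike.star_def, conj_trivial]
        rw [real_inner_comm]
        rw [hf_def] at hfx; simp only at hfx
        rw [hfx, mul_zero]
      have := AffineSubspace.vadd_mem_of_mem_direction this hp
      rwa [vsub_vadd] at this
    · intro hx
      have : x -ᵥ p ∈ H.direction := AffineSubspace.vsub_mem_direction hx hp
      exact (Submodule.mem_orthogonal _ _).mp hnmem _ this
  have hfline : ∀ a b : E, ∀ t : ℝ, f (t • (b -ᵥ a) +ᵥ a) = f a + t * (f b - f a) := by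
    intro a b t
    have h1 : f (t • (b -ᵥ a) +ᵥ a) - f a = (inner ℝ ((t • (b -ᵥ a) +ᵥ a) -ᵥ a) n : ℝ) := hfsub _ _
    rw [vadd_vsub] at h1
    rw [real_inner_smul_left] at h1
    rw [← hfsub b a] at h1
    linarith
  refine ⟨(EuclideanGeometry.reflection H).toAffineEquiv, f, ?_, ?_, hfcont, hfmem, hfline, ?_⟩
  · refine ⟨?_, ?_, ?_⟩
    · rw [AffineIsometryEquiv.coe_toAffineEquiv]
      exact (EuclideanGeometry.reflection H).isometry
    · intro x hx
      show (EuclideanGeometry.reflection H).toAffineEquiv x = x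
      rw [AffineIsometryEquiv.coe_toAffineEquiv]
      exact (EuclideanGeometry.reflection_eq_self_iff x).mpr hx
    · have hxex : ∃ x : E, x ∉ H := by
        by_contra hall
        push_neg at hall
        have : H.direction = ⊤ := by
          rw [Submodule.eq_top_iff']
          intro v
          have := AffineSubspace.vsub_mem_direction (hall (v +ᵥ p)) hp
          rwa [vadd_vsub] at this
        rw [this, finrank_top] at hdim
        omega
      obtain ⟨x, hx⟩ := hxex
      intro heq
      apply hx
      have : (EuclideanGeometry.reflection H).toAffineEquiv x = x := by rw [heq]; rfl
      rw [AffineIsometryEquiv.coe_toAffineEquiv] at this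
      exact (EuclideanGeometry.reflection_eq_self_iff x).mp this
  · intro x
    show (EuclideanGeometry.reflection H).toAffineEquiv
      ((EuclideanGeometry.reflection H).toAffineEquiv x) = x
    rw [AffineIsometryEquiv.coe_toAffineEquiv]
    exact EuclideanGeometry.reflection_reflection H x
  · intro y c
    set π : E := (EuclideanGeometry.orthogonalProjection H c : E) with hπ_def
    have hπH : π ∈ H := (EuclideanGeometry.orthogonalProjection H c).2
    have h1 : c -ᵥ π ∈ H.directionᗮ :=
      EuclideanGeometry.vsub_orthogonalProjection_mem_direction_orthogonal H c
    rw [← hspan] at h1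
    obtain ⟨c', hc'⟩ := Submodule.mem_span_singleton.mp h1
    have hc'val : c' = f c := by
      have h2 : (inner ℝ (c -ᵥ π) n : ℝ) = c' := by
        rw [← hc', real_inner_smul_left, real_inner_self_eq_norm_sq, hnorm]
        ring
      have h3 : f c - f π = (inner ℝ (c -ᵥ π) n : ℝ) := hfsub c π
      have h4 : f π = 0 := (hfmem π).mpr hπH
      rw [h2] at h3
      linarith
    have hvec : c -ᵥ π = f c • n := by rw [← hc', hc'val]
    have hrc : (EuclideanGeometry.reflection H).toAffineEquiv c = (π -ᵥ c) +ᵥ π := by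
      rw [AffineIsometryEquiv.coe_toAffineEquiv]
      exact EuclideanGeometry.reflection_apply' H c
    rw [hrc]
    have hysub : y -ᵥ ((π -ᵥ c) +ᵥ π) = (y -ᵥ c) + (2 * f c) • n := by
      rw [vsub_vadd_eq_vsub_sub]
      have e1 : y -ᵥ π = (y -ᵥ c) + (c -ᵥ π) := (vsub_add_vsub_cancel y c π).symm
      have e2 : π -ᵥ c = -(c -ᵥ π) := (neg_vsub_eq_vsub_rev c π).symm
      rw [e1, e2, hvec]
      rw [two_mul, add_smul]
      abel
    rw [dist_eq_norm_vsub V, dist_eq_norm_vsub V, hysub]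
    rw [norm_add_sq_real]
    rw [real_inner_smul_right, norm_smul, Real.norm_eq_abs, hnorm, mul_one, sq_abs]
    have : (inner ℝ (y -ᵥ c) n : ℝ) = f y - f c := (hfsub y c).symm
    rw [this]
    ring

end Aux

section Aux2

variable {V : Type*} [NormedAddCommGroup V] [InnerProductSpace ℝ V] [FiniteDimensional ℝ V]
variable {E : Type*} [MetricSpace E] [NormedAddTorsor V E]

set_option linter.unusedSectionVars false

lemma sign_lemma {f : E → ℝ} (hf : Continuous f) {s : Set E} (hs : IsPreconnected s)
    (hfs : ∀ z ∈ s, f z ≠ 0) {y₀ : E} (hy₀ : y₀ ∈ s) :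
    ∀ y ∈ closure s, 0 ≤ f y₀ * f y := by
  have hpos : ∀ y ∈ s, 0 < f y₀ * f y := by
    intro y hy
    rcases lt_or_gt_of_ne (hfs y₀ hy₀) with h₀ | h₀ <;>
      rcases lt_or_gt_of_ne (hfs y hy) with h₁ | h₁
    · exact mul_pos_of_neg_of_neg h₀ h₁
    · exfalso
      have h2 : (0 : ℝ) ∈ Set.Icc (f y₀) (f y) := ⟨le_of_lt h₀, le_of_lt h₁⟩
      obtain ⟨z, hz, hz0⟩ := hs.intermediate_value hy₀ hy hf.continuousOn h2
      exact hfs z hz hz0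
    · exfalso
      have h2 : (0 : ℝ) ∈ Set.Icc (f y) (f y₀) := ⟨le_of_lt h₁, le_of_lt h₀⟩
      obtain ⟨z, hz, hz0⟩ := hs.intermediate_value hy hy₀ hf.continuousOn h2
      exact hfs z hz hz0
    · exact mul_pos h₀ h₁
  intro y hy
  have hcl : closure s ⊆ {y | 0 ≤ f y₀ * f y} :=
    closure_minimal (fun y hy => (hpos y hy).le)
      (isClosed_le continuous_const (continuous_const.mul hf))
  exact hcl hy

lemma compl_preserved {𝓗 : Set (AffineSubspace ℝ E)}
    (hmap : ∀ w ∈ reflGroup (V := V) 𝓗, ∀ H ∈ 𝓗, H.map w.toAffineMap ∈ 𝓗)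
    {w : E ≃ᵃ[ℝ] E} (hw : w ∈ reflGroup (V := V) 𝓗) {x : E}
    (hx : x ∈ (⋃ H ∈ 𝓗, (H : Set E))ᶜ) : w x ∈ (⋃ H ∈ 𝓗, (H : Set E))ᶜ := by
  simp only [Set.mem_compl_iff, Set.mem_iUnion, not_exists, SetLike.mem_coe] at hx ⊢
  intro H hH hwx
  have hw' : w⁻¹ ∈ reflGroup (V := V) 𝓗 := inv_mem hw
  have hH' := hmap w⁻¹ hw' H hH
  refine hx _ hH' ?_
  rw [AffineSubspace.mem_map]
  refine ⟨w x, hwx, ?_⟩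
  simp [AffineEquiv.inv_def]

lemma core_descent {𝓗 : Set (AffineSubspace ℝ E)}
    (h𝓗 : ∀ H ∈ 𝓗, IsAffineHyperplane (V := V) H)
    (hmap : ∀ w ∈ reflGroup (V := V) 𝓗, ∀ H ∈ 𝓗, H.map w.toAffineMap ∈ 𝓗)
    (hfin : ∀ s t : Set E, IsCompact s → IsCompact t →
      {w : E ≃ᵃ[ℝ] E | w ∈ reflGroup (V := V) 𝓗 ∧ (⇑w '' s ∩ t).Nonempty}.Finite)
    (c₀ : E) (hc₀ : c₀ ∈ (⋃ H ∈ 𝓗, (H : Set E))ᶜ)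
    (x : E) (hx : x ∈ closure (connectedComponentIn (⋃ H ∈ 𝓗, (H : Set E))ᶜ c₀))
    (w : E ≃ᵃ[ℝ] E) (hw : w ∈ reflGroup (V := V) 𝓗)
    (hxw : x ∈ ⇑w '' closure (connectedComponentIn (⋃ H ∈ 𝓗, (H : Set E))ᶜ c₀)) :
    ∃ σ ∈ reflGroup (V := V) 𝓗, σ x = x ∧
      ⇑σ '' closure (connectedComponentIn (⋃ H ∈ 𝓗, (H : Set E))ᶜ c₀) =
      ⇑w '' closure (connectedComponentIn (⋃ H ∈ 𝓗, (H : Set E))ᶜ c₀) := by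
  set F : Set E := (⋃ H ∈ 𝓗, (H : Set E))ᶜ with hF_def
  set C : Set E := connectedComponentIn F c₀ with hC_def
  set A : Set E := closure C with hA_def
  have hCF : C ⊆ F := connectedComponentIn_subset _ _
  have hc₀C : c₀ ∈ C := mem_connectedComponentIn hc₀
  have hCconn : IsPreconnected C := isPreconnected_connectedComponentIn
  have hmemF : ∀ z : E, z ∈ F ↔ ∀ H ∈ 𝓗, z ∉ H := by
    intro z
    simp [hF_def, Set.mem_compl_iff, Set.mem_iUnion]
  -- finiteness of orbit in balls
  have Sfin : ∀ R : ℝ, {g : E ≃ᵃ[ℝ] E | g ∈ reflGroup (V := V) 𝓗 ∧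
      dist c₀ (g c₀) ≤ R}.Finite := by
    intro R
    refine (hfin {c₀} (Metric.closedBall c₀ R) isCompact_singleton
      (aux_compact_closedBall c₀ R)).subset ?_
    rintro g ⟨hg, hgd⟩
    exact ⟨hg, ⟨g c₀, ⟨c₀, rfl, rfl⟩, by rwa [Metric.mem_closedBall, dist_comm]⟩⟩
  -- images of C under elements of the group
  have himgC_preconn : ∀ g : E ≃ᵃ[ℝ] E, g ∈ reflGroup (V := V) 𝓗 →
      IsPreconnected (⇑g '' C) := by
    intro g hg
    exact hCconn.image _ (reflGroup_isometry hg).continuous.continuousOn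
  have himgC_F : ∀ g : E ≃ᵃ[ℝ] E, g ∈ reflGroup (V := V) 𝓗 → ⇑g '' C ⊆ F := by
    rintro g hg z ⟨y, hy, rfl⟩
    exact compl_preserved hmap hg (hCF hy)
  -- if g c₀ ∈ C then g '' A = A
  have hfix : ∀ g : E ≃ᵃ[ℝ] E, g ∈ reflGroup (V := V) 𝓗 → g c₀ ∈ C → ⇑g '' A = A := by
    intro g hg hgc₀
    have hCeq : C = connectedComponentIn F (g c₀) := connectedComponentIn_eq hgc₀
    have h1 : ⇑g '' C ⊆ C := by
      have hsub := (himgC_preconn g hg).subset_connectedComponentIn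
        (x := g c₀) ⟨c₀, hc₀C, rfl⟩ (himgC_F g hg)
      rwa [← hCeq] at hsub
    have h2 : C ⊆ ⇑g '' C := by
      have hg' : g⁻¹ ∈ reflGroup (V := V) 𝓗 := inv_mem hg
      have hc₀mem : c₀ ∈ ⇑g⁻¹ '' C := ⟨g c₀, hgc₀, by simp [AffineEquiv.inv_def]⟩
      have h3 : ⇑g⁻¹ '' C ⊆ C :=
        (himgC_preconn g⁻¹ hg').subset_connectedComponentIn hc₀mem (himgC_F g⁻¹ hg')
      intro z hz
      have : g⁻¹ z ∈ C := h3 ⟨z, hz, rfl⟩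
      exact ⟨g⁻¹ z, this, by simp [AffineEquiv.inv_def]⟩
    have hgC : ⇑g '' C = C := le_antisymm h1 h2
    have hiso : Isometry ⇑g := reflGroup_isometry hg
    let e : E ≃ᵢ E := ⟨g.toEquiv, hiso⟩
    have he : ⇑e = ⇑g := rfl
    calc ⇑g '' A = ⇑e '' closure C := by rw [he]
      _ = closure (⇑e '' C) := e.toHomeomorph.image_closure C
      _ = closure C := by rw [he, hgC]
      _ = A := rfl
  -- the strictly-closer set
  set Sd : (E ≃ᵃ[ℝ] E) → Set (E ≃ᵃ[ℝ] E) := fun w =>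
    {g | g ∈ reflGroup (V := V) 𝓗 ∧ dist c₀ (g c₀) < dist c₀ (w c₀)} with hSd_def
  have hSdfin : ∀ w, (Sd w).Finite := by
    intro w
    exact (Sfin (dist c₀ (w c₀))).subset fun g hg => ⟨hg.1, hg.2.le⟩
  have main : ∀ n : ℕ, ∀ w : E ≃ᵃ[ℝ] E, w ∈ reflGroup (V := V) 𝓗 → (Sd w).ncard = n →
      x ∈ ⇑w '' A → ∃ σ ∈ reflGroup (V := V) 𝓗, σ x = x ∧ ⇑σ '' A = ⇑w '' A := by
    intro n
    induction n using Nat.strong_induction_on with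
    | _ n ih =>
      intro w hw hcard hxw
      by_cases hseg : ∃ H ∈ 𝓗, ∃ t ∈ Set.Icc (0 : ℝ) 1, (t • (w c₀ -ᵥ c₀) +ᵥ c₀) ∈ H
      · -- a hyperplane crosses the segment from c₀ to w c₀
        obtain ⟨H, hH𝓗, t, ht, hmem⟩ := hseg
        obtain ⟨r, f, hrefl, hinvol, hfcont, hfmem, hfline, hfdist⟩ :=
          hyperplane_data H (h𝓗 H hH𝓗)
        have hc₀H : c₀ ∉ H := ((hmemF c₀).mp hc₀) H hH𝓗
        have hwc₀F : w c₀ ∈ F := compl_preserved hmap hw hc₀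
        have hwc₀H : w c₀ ∉ H := ((hmemF _).mp hwc₀F) H hH𝓗
        have hfc₀ : f c₀ ≠ 0 := fun h => hc₀H ((hfmem c₀).mp h)
        have hfw : f (w c₀) ≠ 0 := fun h => hwc₀H ((hfmem _).mp h)
        have hft : f (t • (w c₀ -ᵥ c₀) +ᵥ c₀) = 0 := (hfmem _).mpr hmem
        have hlin := hfline c₀ (w c₀) t
        rw [hft] at hlin
        have hprod : f c₀ * f (w c₀) < 0 := by
          rcases eq_or_lt_of_le ht.2 with h1 | h1
          · exfalso; apply hfw; rw [h1] at hlin; linarith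
          · rcases eq_or_lt_of_le ht.1 with h2 | h2
            · exfalso; apply hfc₀; rw [← h2] at hlin; linarith
            · have hbeq : f (w c₀) = ((t - 1) / t) * f c₀ := by
                field_simp
                linear_combination -hlin
              rw [hbeq]
              nlinarith [mul_neg_of_neg_of_pos
                (div_neg_of_neg_of_pos (by linarith : t - 1 < 0) h2)
                (mul_self_pos.mpr hfc₀)]
        have hCnz : ∀ z ∈ C, f z ≠ 0 := fun z hz h =>
          ((hmemF z).mp (hCF hz)) H hH𝓗 ((hfmem z).mp h)
        have hsignC : 0 ≤ f c₀ * f x := sign_lemma hfcont hCconn hCnz hc₀C x hx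
        have hWnz : ∀ z ∈ ⇑w '' C, f z ≠ 0 := fun z hz h =>
          ((hmemF z).mp (himgC_F w hw hz)) H hH𝓗 ((hfmem z).mp h)
        have hxclW : x ∈ closure (⇑w '' C) := by
          have : ⇑w '' A ⊆ closure (⇑w '' C) :=
            image_closure_subset_closure_image (reflGroup_isometry hw).continuous
          exact this hxw
        have hsignW : 0 ≤ f (w c₀) * f x :=
          sign_lemma hfcont (himgC_preconn w hw) hWnz ⟨c₀, hc₀C, rfl⟩ x hxclW
        have hfx : f x = 0 := by
          have h1 : 0 ≤ (f c₀ * f x) * (f (w c₀) * f x) := mul_nonneg hsignC hsignW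
          have h2 : f x ^ 2 ≤ 0 := by nlinarith
          have h3 : f x ^ 2 = 0 := le_antisymm h2 (sq_nonneg _)
          exact (pow_eq_zero_iff two_ne_zero).mp h3
        have hxH : x ∈ H := (hfmem x).mp hfx
        have hrx : r x = x := hrefl.2.1 x hxH
        have hrW : r ∈ reflGroup (V := V) 𝓗 :=
          Subgroup.subset_closure ⟨H, hH𝓗, hrefl⟩
        have hw' : r * w ∈ reflGroup (V := V) 𝓗 := mul_mem hrW hw
        have hxw' : x ∈ ⇑(r * w) '' A := by
          rw [AffineEquiv.coe_mul, Set.image_comp]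
          exact ⟨x, hxw, hrx⟩
        have hdists : dist c₀ ((r * w) c₀) < dist c₀ (w c₀) := by
          have e1 : (r * w) c₀ = r (w c₀) := rfl
          have e2 : dist c₀ (r (w c₀)) = dist (w c₀) (r c₀) := by
            calc dist c₀ (r (w c₀)) = dist (r c₀) (r (r (w c₀))) :=
                  (hrefl.1.dist_eq _ _).symm
              _ = dist (r c₀) (w c₀) := by rw [hinvol]
              _ = dist (w c₀) (r c₀) := dist_comm _ _
          have e3 := hfdist (w c₀) c₀
          have e4 : dist (w c₀) (r c₀) ^ 2 < dist (w c₀) c₀ ^ 2 := by nlinarith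
          have e5 : dist (w c₀) (r c₀) < dist (w c₀) c₀ :=
            lt_of_pow_lt_pow_left₀ 2 dist_nonneg e4
          rw [e1, e2]
          rw [dist_comm c₀ (w c₀)]
          exact e5
        have hssub : Sd (r * w) ⊂ Sd w := by
          constructor
          · intro g hg
            exact ⟨hg.1, hg.2.trans hdists⟩
          · intro hcon
            exact absurd (hcon ⟨hw', hdists⟩).2 (lt_irrefl _)
        have hcard' : (Sd (r * w)).ncard < n := by
          rw [← hcard]
          exact Set.ncard_lt_ncard hssub (hSdfin w)
        obtain ⟨σ₁, hσ₁W, hσ₁x, hσ₁A⟩ := ih _ hcard' (r * w) hw' rfl hxw'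
        refine ⟨r * σ₁, mul_mem hrW hσ₁W, ?_, ?_⟩
        · show r (σ₁ x) = x
          rw [hσ₁x, hrx]
        · rw [AffineEquiv.coe_mul, Set.image_comp, hσ₁A]
          rw [AffineEquiv.coe_mul, Set.image_comp]
          rw [← Set.image_comp]
          have hrr : ⇑r ∘ ⇑r = id := funext hinvol
          rw [hrr, Set.image_id]
      · -- no hyperplane crosses the segment: w c₀ ∈ C
        push_neg at hseg
        have hwc₀ : w c₀ ∈ C := by
          have hγcont : Continuous (fun t : ℝ => t • (w c₀ -ᵥ c₀) +ᵥ c₀) :=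
            (continuous_id.smul continuous_const).vadd continuous_const
          have himg : (fun t : ℝ => t • (w c₀ -ᵥ c₀) +ᵥ c₀) '' Set.Icc 0 1 ⊆ F := by
            rintro z ⟨t, ht, rfl⟩
            rw [hmemF]
            intro H hH
            exact hseg H hH t ht
          have hconn := (isPreconnected_Icc (a := (0:ℝ)) (b := 1)).image _ hγcont.continuousOn
          have hsub := hconn.subset_connectedComponentIn
            (x := c₀) ⟨0, Set.left_mem_Icc.mpr zero_le_one, by simp⟩ himg
          exact hsub ⟨1, Set.right_mem_Icc.mpr zero_le_one, by simp [vsub_vadd]⟩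
        refine ⟨1, one_mem _, by simp, ?_⟩
        rw [AffineEquiv.coe_one, Set.image_id]
        exact (hfix w hw hwc₀).symm
  exact main (Sd w).ncard w hw rfl hxw

end Aux2

section Aux3

variable {V : Type*} [NormedAddCommGroup V] [InnerProductSpace ℝ V] [FiniteDimensional ℝ V]
variable {E : Type*} [MetricSpace E] [NormedAddTorsor V E]

set_option linter.unusedSectionVars false

lemma local_cover {𝓗 : Set (AffineSubspace ℝ E)}
    (h𝓗 : ∀ H ∈ 𝓗, IsAffineHyperplane (V := V) H)
    (hmap : ∀ w ∈ reflGroup (V := V) 𝓗, ∀ H ∈ 𝓗, H.map w.toAffineMap ∈ 𝓗)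
    (hfin : ∀ s t : Set E, IsCompact s → IsCompact t →
      {w : E ≃ᵃ[ℝ] E | w ∈ reflGroup (V := V) 𝓗 ∧ (⇑w '' s ∩ t).Nonempty}.Finite)
    (c₀ : E) (hc₀ : c₀ ∈ (⋃ H ∈ 𝓗, (H : Set E))ᶜ) (l : E) :
    ∃ ε > (0:ℝ), ∃ J : Set (E ≃ᵃ[ℝ] E), J.Finite ∧ J.Nonempty ∧
      (∀ u ∈ J, u ∈ reflGroup (V := V) 𝓗 ∧
        l ∈ ⇑u '' closure (connectedComponentIn (⋃ H ∈ 𝓗, (H : Set E))ᶜ c₀)) ∧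
      (∀ x ∈ Metric.ball l ε, ∃ u ∈ J,
        x ∈ ⇑u '' closure (connectedComponentIn (⋃ H ∈ 𝓗, (H : Set E))ᶜ c₀)) := by
  set F : Set E := (⋃ H ∈ 𝓗, (H : Set E))ᶜ with hF_def
  set C : Set E := connectedComponentIn F c₀ with hC_def
  set A : Set E := closure C with hA_def
  have hCF : C ⊆ F := connectedComponentIn_subset _ _
  have hc₀C : c₀ ∈ C := mem_connectedComponentIn hc₀
  have hCconn : IsPreconnected C := isPreconnected_connectedComponentIn
  have hmemF : ∀ z : E, z ∈ F ↔ ∀ H ∈ 𝓗, z ∉ H := by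
    intro z
    simp [hF_def, Set.mem_compl_iff, Set.mem_iUnion]
  -- finiteness of orbit pieces
  have Sfin : ∀ (z : E) (R : ℝ), {g : E ≃ᵃ[ℝ] E | g ∈ reflGroup (V := V) 𝓗 ∧
      dist z (g c₀) ≤ R}.Finite := by
    intro z R
    refine (hfin {c₀} (Metric.closedBall z R) isCompact_singleton
      (aux_compact_closedBall z R)).subset ?_
    rintro g ⟨hg, hgd⟩
    exact ⟨hg, ⟨g c₀, ⟨c₀, rfl, rfl⟩, by rwa [Metric.mem_closedBall, dist_comm]⟩⟩
  -- existence of a closest orbit point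
  have hmin : ∀ z : E, ∃ g, g ∈ reflGroup (V := V) 𝓗 ∧
      ∀ g' ∈ reflGroup (V := V) 𝓗, dist z (g c₀) ≤ dist z (g' c₀) := by
    intro z
    have hBfin := Sfin z (dist z c₀)
    have hBne : (1 : E ≃ᵃ[ℝ] E) ∈ {g : E ≃ᵃ[ℝ] E | g ∈ reflGroup (V := V) 𝓗 ∧
        dist z (g c₀) ≤ dist z c₀} := ⟨one_mem _, by simp⟩
    obtain ⟨g₀, hg₀mem, hg₀min⟩ := Set.exists_min_image _ (fun g => dist z (g c₀))
      hBfin ⟨_, hBne⟩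
    refine ⟨g₀, hg₀mem.1, fun g' hg' => ?_⟩
    by_cases hg'B : dist z (g' c₀) ≤ dist z c₀
    · exact hg₀min g' ⟨hg', hg'B⟩
    · exact hg₀mem.2.trans (le_of_not_ge hg'B)
  -- a closest orbit point means membership in that translate of A
  have claimA : ∀ z : E, ∀ g, g ∈ reflGroup (V := V) 𝓗 →
      (∀ g' ∈ reflGroup (V := V) 𝓗, dist z (g c₀) ≤ dist z (g' c₀)) →
      z ∈ ⇑g '' A := by
    intro z g hg hmin'
    set y : E := g⁻¹ z with hy_def
    have hgy : g y = z := by simp [hy_def, AffineEquiv.inv_def]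
    have hzy : ∀ v : E, dist z (g v) = dist y v := by
      intro v
      conv_lhs => rw [← hgy]
      exact (reflGroup_isometry hg).dist_eq _ _
    -- y is on the closed c₀-side of every hyperplane
    have hside : ∀ H ∈ 𝓗, ∀ t : ℝ, 0 ≤ t → t < 1 → (t • (y -ᵥ c₀) +ᵥ c₀) ∉ H := by
      intro H hH
      obtain ⟨r, f, hrefl, hinvol, hfcont, hfmem, hfline, hfdist⟩ :=
        hyperplane_data H (h𝓗 H hH)
      have hfc₀ : f c₀ ≠ 0 := fun h => ((hmemF c₀).mp hc₀) H hH ((hfmem c₀).mp h)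
      have hrW : r ∈ reflGroup (V := V) 𝓗 := Subgroup.subset_closure ⟨H, hH, hrefl⟩
      have hsign : 0 ≤ f c₀ * f y := by
        by_contra hneg
        push_neg at hneg
        have h1 : dist y (r c₀) ^ 2 < dist y c₀ ^ 2 := by
          have := hfdist y c₀
          nlinarith
        have h2 : dist y (r c₀) < dist y c₀ :=
          lt_of_pow_lt_pow_left₀ 2 dist_nonneg h1
        have h3 : dist z ((g * r) c₀) < dist z (g c₀) := by
          have e1 : (g * r) c₀ = g (r c₀) := rfl
          rw [e1, hzy, hzy]
          exact h2
        exact absurd (hmin' (g * r) (mul_mem hg hrW)) (not_le.mpr h3)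
      intro t ht0 ht1 hmem
      have hft : f (t • (y -ᵥ c₀) +ᵥ c₀) = 0 := (hfmem _).mpr hmem
      rw [hfline c₀ y t] at hft
      rcases lt_or_gt_of_ne hfc₀ with h₀ | h₀
      · have hfy : f y ≤ 0 := by nlinarith
        nlinarith
      · have hfy : 0 ≤ f y := by nlinarith
        nlinarith
    -- the half-open segment from c₀ to y stays in the chamber
    have hγcont : Continuous (fun t : ℝ => t • (y -ᵥ c₀) +ᵥ c₀) :=
      (continuous_id.smul continuous_const).vadd continuous_const
    have himg : (fun t : ℝ => t • (y -ᵥ c₀) +ᵥ c₀) '' Set.Ico 0 1 ⊆ F := by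
      rintro p ⟨t, ht, rfl⟩
      rw [hmemF]
      intro H hH
      exact hside H hH t ht.1 ht.2
    have hconn := (isPreconnected_Ico (a := (0:ℝ)) (b := 1)).image _ hγcont.continuousOn
    have hsub := hconn.subset_connectedComponentIn
      (x := c₀) ⟨0, ⟨le_refl 0, zero_lt_one⟩, by simp⟩ himg
    have hyA : y ∈ A := by
      have h1 : y ∈ (fun t : ℝ => t • (y -ᵥ c₀) +ᵥ c₀) '' closure (Set.Ico 0 1) := by
        refine ⟨1, ?_, by simp [vsub_vadd]⟩
        rw [closure_Ico (zero_ne_one)]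
        exact ⟨zero_le_one, le_refl 1⟩
      have h2 := image_closure_subset_closure_image (s := Set.Ico (0:ℝ) 1) hγcont h1
      have h3 : closure ((fun t : ℝ => t • (y -ᵥ c₀) +ᵥ c₀) '' Set.Ico 0 1) ⊆ closure C :=
        closure_mono hsub
      exact h3 h2
    exact ⟨y, hyA, hgy⟩
  -- the minimum orbit distance from l
  obtain ⟨v₀, hv₀W, hv₀min⟩ := hmin l
  set m : ℝ := dist l (v₀ c₀) with hm_def
  -- the nearby orbit elements
  set B : Set (E ≃ᵃ[ℝ] E) := {g | g ∈ reflGroup (V := V) 𝓗 ∧ dist l (g c₀) ≤ m + 2}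
    with hB_def
  have hBfin : B.Finite := Sfin l (m + 2)
  set B' : Set (E ≃ᵃ[ℝ] E) := {g ∈ B | m < dist l (g c₀)} with hB'_def
  have hB'fin : B'.Finite := hBfin.subset (Set.sep_subset _ _)
  -- a positive gap δ
  have hδ : ∃ δ > (0:ℝ), ∀ g ∈ B', m + δ ≤ dist l (g c₀) := by
    rcases B'.eq_empty_or_nonempty with hB'e | hB'ne
    · exact ⟨1, zero_lt_one, fun g hg => by rw [hB'e] at hg; exact absurd hg (Set.notMem_empty g)⟩
    · obtain ⟨g₁, hg₁mem, hg₁min⟩ := Set.exists_min_image _ (fun g => dist l (g c₀))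
        hB'fin hB'ne
      refine ⟨dist l (g₁ c₀) - m, by linarith [hg₁mem.2], fun g hg => ?_⟩
      have := hg₁min g hg
      linarith
  obtain ⟨δ, hδpos, hδgap⟩ := hδ
  set ε : ℝ := min (δ / 3) 1 with hε_def
  have hεpos : 0 < ε := lt_min (by linarith) zero_lt_one
  set J : Set (E ≃ᵃ[ℝ] E) := {g ∈ B | dist l (g c₀) = m} with hJ_def
  have hJfin : J.Finite := hBfin.subset (Set.sep_subset _ _)
  have hJW : ∀ u ∈ J, u ∈ reflGroup (V := V) 𝓗 := fun u hu => hu.1.1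
  have hJl : ∀ u ∈ J, l ∈ ⇑u '' A := by
    intro u hu
    refine claimA l u (hJW u hu) ?_
    intro g' hg'
    rw [hu.2]
    exact hv₀min g' hg'
  have hJne : J.Nonempty := by
    refine ⟨v₀, ⟨⟨hv₀W, by rw [← hm_def]; linarith⟩, rfl⟩⟩
  refine ⟨ε, hεpos, J, hJfin, hJne, fun u hu => ⟨hJW u hu, hJl u hu⟩, ?_⟩
  intro x hx
  rw [Metric.mem_ball] at hx
  obtain ⟨u, huW, humin⟩ := hmin x
  have hubound : dist l (u c₀) ≤ m + 2 * ε := by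
    have h1 : dist l (u c₀) ≤ dist l x + dist x (u c₀) := dist_triangle _ _ _
    have h2 : dist x (u c₀) ≤ dist x (v₀ c₀) := humin v₀ hv₀W
    have h3 : dist x (v₀ c₀) ≤ dist x l + dist l (v₀ c₀) := dist_triangle _ _ _
    have h4 : dist l x < ε := by rwa [dist_comm] at hx
    have h5 : dist x l < ε := hx
    rw [← hm_def] at h3
    linarith
  have huB : u ∈ B := by
    refine ⟨huW, ?_⟩
    have : ε ≤ 1 := min_le_right _ _
    linarith
  have hueq : dist l (u c₀) = m := by
    rcases eq_or_lt_of_le (hv₀min u huW) with h | h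
    · exact h.symm
    · exfalso
      have huB' : u ∈ B' := ⟨huB, h⟩
      have := hδgap u huB'
      have hε3 : ε ≤ δ / 3 := min_le_left _ _
      linarith
  exact ⟨u, ⟨huB, hueq⟩, claimA x u huW humin⟩

end Aux3

/-- Let `𝓗` be an admissible affine hyperplane arrangement in `E`, let `K`
be a subgroup of the isometry group of `E` stabilizing `⋀` and preserving `𝓗`, set
`W_{𝓗,K} = K ⋉ W_𝓗`, let `L` be a flat lying over `⋀`, and let `l ∈ L ∩ ⋀`.  Then
`{w·L : w ∈ W_{𝓗,K}, l ∈ w·L}` equals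
`{σ·M : σ ∈ W_𝓗^l, M = w·L for some w ∈ W_{𝓗,K} such that M lies over ⋀ and l ∈ M}`,
where `W_𝓗^l` is the stabilizer of `l` in `W_𝓗`. -/
theorem translates_through_point_description
    {V : Type*} [NormedAddCommGroup V] [InnerProductSpace ℝ V] [FiniteDimensional ℝ V]
    {E : Type*} [MetricSpace E] [NormedAddTorsor V E]
    (𝓗 : Set (AffineSubspace ℝ E)) (h𝓗 : ∀ H ∈ 𝓗, IsAffineHyperplane (V := V) H)
    (hadm : Admissible 𝓗)
    (C : Set E) (hC : IsChamber 𝓗 C) (A : Set E) (hA : A = closure C)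
    (K : Subgroup (E ≃ᵃ[ℝ] E))
    (hKiso : ∀ k ∈ K, Isometry k)
    (hKA : ∀ k ∈ K, ⇑k '' A = A)
    (hK𝓗 : ∀ k ∈ K, ∀ H ∈ 𝓗, H.map k.toAffineMap ∈ 𝓗)
    (L : AffineSubspace ℝ E) (hL : IsFlat 𝓗 L) (hLover : LiesOver L A)
    (l : E) (hlL : l ∈ L) (hlA : l ∈ A) :
    {M : AffineSubspace ℝ E | ∃ w ∈ reflGroup 𝓗 ⊔ K, M = L.map w.toAffineMap ∧ l ∈ M} =
      {M : AffineSubspace ℝ E | ∃ σ ∈ reflGroup 𝓗, σ l = l ∧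
        ∃ M' : AffineSubspace ℝ E, (∃ w ∈ reflGroup 𝓗 ⊔ K, M' = L.map w.toAffineMap) ∧
          LiesOver M' A ∧ l ∈ M' ∧ M = M'.map σ.toAffineMap} := by
  have hmulAff : ∀ a b : E ≃ᵃ[ℝ] E, (a * b).toAffineMap = a.toAffineMap.comp b.toAffineMap := by
    intro a b; ext x; simp [AffineEquiv.coe_mul]
  apply Set.eq_of_subset_of_subset
  · -- hard inclusion
    rintro M ⟨w, hwJ, hMeq, hlM⟩
    obtain ⟨c₀, hc₀F, hCdef⟩ := hC
    have hlA' : l ∈ closure (connectedComponentIn (⋃ H ∈ 𝓗, (H : Set E))ᶜ c₀) := by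
      rw [← hCdef, ← hA]; exact hlA
    obtain ⟨ε, hεpos, J, hJfin, hJne, hJprop, hJcover⟩ :=
      local_cover h𝓗 hadm.1 hadm.2 c₀ hc₀F l
    have hAeq : A = closure (connectedComponentIn (⋃ H ∈ 𝓗, (H : Set E))ᶜ c₀) := by
      rw [hA, hCdef]
    rw [← hAeq] at hJprop hJcover
    set N : (E ≃ᵃ[ℝ] E) → AffineSubspace ℝ E :=
      fun u => affineSpan ℝ ((M : Set E) ∩ ⇑u '' A) with hN_def
    have hNle : ∀ u, N u ≤ M := fun u => affineSpan_le.mpr Set.inter_subset_left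
    have hlN : ∀ u ∈ J, l ∈ N u := fun u hu =>
      subset_affineSpan ℝ _ ⟨hlM, (hJprop u hu).2⟩
    have hMcover : ∀ x ∈ M, ∃ u ∈ J, x ∈ N u := by
      intro x hxM
      by_cases hxl : x = l
      · obtain ⟨u, hu⟩ := hJne; exact ⟨u, hu, hxl ▸ hlN u hu⟩
      · have hd : 0 < dist x l := dist_pos.mpr hxl
        set t : ℝ := ε / (2 * dist x l) with ht_def
        have htpos : 0 < t := div_pos hεpos (by linarith)
        set y : E := t • (x -ᵥ l) +ᵥ l with hy_def
        have hyM : y ∈ M := M.smul_vsub_vadd_mem t hxM hlM hlM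
        have hyball : y ∈ Metric.ball l ε := by
          rw [Metric.mem_ball]
          have h1 : dist y l = t * dist x l := by
            rw [dist_eq_norm_vsub V, dist_eq_norm_vsub V, hy_def, vadd_vsub,
              norm_smul, Real.norm_eq_abs, abs_of_pos htpos]
          have h2 : t * dist x l = ε / 2 := by
            rw [ht_def]; field_simp
          rw [h1, h2]; linarith
        obtain ⟨u, huJ, hyuA⟩ := hJcover y hyball
        refine ⟨u, huJ, ?_⟩
        have hyN : y ∈ N u := subset_affineSpan ℝ _ ⟨hyM, hyuA⟩
        have hlNu : l ∈ N u := hlN u huJ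
        have hx : x = t⁻¹ • (y -ᵥ l) +ᵥ l := by
          rw [hy_def, vadd_vsub, smul_smul, inv_mul_cancel₀ (ne_of_gt htpos), one_smul,
            vsub_vadd]
        rw [hx]
        exact (N u).smul_vsub_vadd_mem t⁻¹ hyN hlNu hlNu
    have hdir : ∀ v : V, v ∈ M.direction → ∃ u ∈ J, v ∈ (N u).direction := by
      intro v hv
      have hxM : v +ᵥ l ∈ M := AffineSubspace.vadd_mem_of_mem_direction hv hlM
      obtain ⟨u, huJ, hxN⟩ := hMcover _ hxM
      refine ⟨u, huJ, ?_⟩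
      have h1 := AffineSubspace.vsub_mem_direction hxN (hlN u huJ)
      rwa [vadd_vsub] at h1
    have hexists : ∃ u ∈ J, M ≤ N u := by
      haveI := hJfin.to_subtype
      set Vm := M.direction with hVm_def
      set Ku : ↥J → Submodule ℝ ↥Vm :=
        fun u => ((N u.1).direction).comap Vm.subtype with hKu_def
      have hclosed : ∀ u : ↥J, IsClosed ((Ku u : Set ↥Vm)) := by
        intro u
        have h1 : IsClosed (((N u.1).direction : Set V)) :=
          (N u.1).direction.closed_of_finiteDimensional
        exact h1.preimage continuous_subtype_val
      have hcover : ⋃ u : ↥J, (Ku u : Set ↥Vm) = Set.univ := by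
        ext v
        simp only [Set.mem_iUnion, Set.mem_univ, iff_true, SetLike.mem_coe,
          Submodule.mem_comap, Submodule.subtype_apply]
        obtain ⟨u, huJ, hu⟩ := hdir v.1 v.2
        exact ⟨⟨u, huJ⟩, hu⟩
      haveI : Nonempty ↥Vm := ⟨0⟩
      obtain ⟨u, hu⟩ := nonempty_interior_of_iUnion_of_closed hclosed hcover
      have htop : Ku u = ⊤ := Submodule.eq_top_of_nonempty_interior' _ hu
      refine ⟨u.1, u.2, ?_⟩
      intro x hxM
      have hvm : x -ᵥ l ∈ Vm := AffineSubspace.vsub_mem_direction hxM hlM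
      have h2 : (⟨x -ᵥ l, hvm⟩ : ↥Vm) ∈ Ku u := by rw [htop]; exact Submodule.mem_top
      have h3 : x -ᵥ l ∈ (N u.1).direction := by
        simpa [hKu_def, Submodule.mem_comap] using h2
      have h4 := AffineSubspace.vadd_mem_of_mem_direction h3 (hlN u.1 u.2)
      rwa [vsub_vadd] at h4
    obtain ⟨u, huJ, hMle⟩ := hexists
    have hNM : N u = M := le_antisymm (hNle u) hMle
    have huW : u ∈ reflGroup 𝓗 := (hJprop u huJ).1
    have hluA : l ∈ ⇑u '' A := (hJprop u huJ).2
    have hluA' : l ∈ ⇑u '' closure (connectedComponentIn (⋃ H ∈ 𝓗, (H : Set E))ᶜ c₀) := by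
      rwa [← hAeq]
    obtain ⟨σ, hσW, hσl, hσA⟩ :=
      core_descent h𝓗 hadm.1 hadm.2 c₀ hc₀F l hlA' u huW hluA'
    rw [← hAeq] at hσA
    have hσsyml : σ.symm l = l := by
      conv_lhs => rw [← hσl]
      exact σ.symm_apply_apply l
    have hWle : reflGroup 𝓗 ≤ reflGroup 𝓗 ⊔ K := le_sup_left
    refine ⟨σ, hσW, hσl, M.map σ.symm.toAffineMap, ⟨σ⁻¹ * w, ?_, ?_⟩, ?_, ?_, ?_⟩
    · exact mul_mem (inv_mem (hWle hσW)) hwJ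
    · rw [hMeq, AffineSubspace.map_map, hmulAff, AffineEquiv.inv_def]
    · -- LiesOver
      show M.map σ.symm.toAffineMap = affineSpan ℝ ((M.map σ.symm.toAffineMap : Set E) ∩ A)
      have hsymm_img : ⇑σ.symm '' (⇑σ '' A) = A := by
        rw [← Set.image_comp]
        have : ⇑σ.symm ∘ ⇑σ = id := funext (σ.symm_apply_apply)
        rw [this, Set.image_id]
      have hset : (M.map σ.symm.toAffineMap : Set E) ∩ A
          = ⇑σ.symm '' ((M : Set E) ∩ ⇑u '' A) := by
        rw [Set.image_inter σ.symm.injective]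
        rw [← hσA, hsymm_img]
        congr 1
      calc M.map σ.symm.toAffineMap = (N u).map σ.symm.toAffineMap := by rw [hNM]
        _ = affineSpan ℝ (⇑σ.symm.toAffineMap '' ((M : Set E) ∩ ⇑u '' A)) :=
            AffineSubspace.map_span _ _
        _ = affineSpan ℝ ((M.map σ.symm.toAffineMap : Set E) ∩ A) := by
            rw [hset]
            congr 1
    · exact AffineSubspace.mem_map.mpr ⟨l, hlM, hσsyml⟩
    · rw [AffineSubspace.map_map]
      have : σ.toAffineMap.comp σ.symm.toAffineMap = AffineMap.id ℝ E := by
        ext x; simp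
      rw [this, AffineSubspace.map_id]
  · -- easy inclusion
    rintro M ⟨σ, hσW, hσl, M', ⟨w, hwJ, hM'eq⟩, _hlies, hlM', hMeq⟩
    have hWle : reflGroup 𝓗 ≤ reflGroup 𝓗 ⊔ K := le_sup_left
    refine ⟨σ * w, mul_mem (hWle hσW) hwJ, ?_, ?_⟩
    · rw [hMeq, hM'eq, AffineSubspace.map_map, hmulAff]
    · rw [hMeq]
      exact AffineSubspace.mem_map.mpr ⟨l, hlM', hσl⟩
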